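/- Let σ be the smallest nonzero singular value of I − P₀. For every ε > 0, if δ = ε·σ/(2 n^{3/2}), then for every s ∈ [0,1] with s ≤ δ one has ‖π_s − π₀‖_TV ≤ ε. In particular, s ↦ π_s is continuous at s = 0 with respect to the total variation norm. -/

import Mathlib

open Matrix BigOperators

/-- A row-stochastic matrix: nonnegative entries, each row sums to 1. -/
def IsStochastic {n : ℕ} (P : Matrix (Fin n) (Fin n) ℝ) : Prop :=
  (∀ i j, 0 ≤ P i j) ∧ ∀ i, ∑ j, P i j = 1

/-- Irreducibility: every state can reach every other state. -/
def MCIrreducible {n : ℕ} (P : Matrix (Fin n) (Fin n) ℝ) : Prop :=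
  ∀ i j, ∃ m : ℕ, 0 < (P ^ m) i j

/-- Aperiodicity (for a finite chain): every state has eventually positive return
probabilities. -/
def MCAperiodic {n : ℕ} (P : Matrix (Fin n) (Fin n) ℝ) : Prop :=
  ∀ i : Fin n, ∃ N : ℕ, ∀ m : ℕ, N ≤ m → 0 < (P ^ m) i i

/-- A probability (row) vector. -/
def IsProbVec {n : ℕ} (v : Fin n → ℝ) : Prop :=
  (∀ i, 0 ≤ v i) ∧ ∑ i, v i = 1

/-- Total variation distance between two vectors. -/
noncomputable def tvDist {n : ℕ} (μ ν : Fin n → ℝ) : ℝ :=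
  (1 / 2) * ∑ i, |μ i - ν i|

/-- Euclidean norm on ℝⁿ. -/
noncomputable def euclNorm {n : ℕ} (v : Fin n → ℝ) : ℝ :=
  Real.sqrt (∑ i, (v i) ^ 2)

/-- Mixing time of `P` with stationary distribution `π`. -/
noncomputable def mixingTime {n : ℕ} (P : Matrix (Fin n) (Fin n) ℝ)
    (π : Fin n → ℝ) (ε : ℝ) : ℕ :=
  sInf {T : ℕ | ∀ ν : Fin n → ℝ, IsProbVec ν → tvDist (ν ᵥ* (P ^ T)) π ≤ ε}

/-- The interpolation `P_t = (1-t)·P₀ + t·P₁`. -/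
noncomputable def Pt {n : ℕ} (P₀ P₁ : Matrix (Fin n) (Fin n) ℝ) (t : ℝ) :
    Matrix (Fin n) (Fin n) ℝ :=
  (1 - t) • P₀ + t • P₁

/-- The ordered product `P_{(j+1)/T} P_{(j+2)/T} ⋯ P_{k/T}` (identity if `j ≥ k`). -/
noncomputable def prodSeg {n : ℕ} (P₀ P₁ : Matrix (Fin n) (Fin n) ℝ) (T j k : ℕ) :
    Matrix (Fin n) (Fin n) ℝ :=
  ((List.range (k - j)).map (fun i => Pt P₀ P₁ (((j : ℝ) + (i : ℝ) + 1) / (T : ℝ)))).prod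

/-- The ordered product `P_{1/T} P_{2/T} ⋯ P_{k/T}`. -/
noncomputable def adiabProd {n : ℕ} (P₀ P₁ : Matrix (Fin n) (Fin n) ℝ) (T k : ℕ) :
    Matrix (Fin n) (Fin n) ℝ :=
  prodSeg P₀ P₁ T 0 k

/-- Adiabatic time of the adiabatic evolution between `P₀` and `P₁`,
with `π₁` the stationary distribution of `P₁`. -/
noncomputable def adiabaticTime {n : ℕ} (P₀ P₁ : Matrix (Fin n) (Fin n) ℝ)
    (π₁ : Fin n → ℝ) (ε : ℝ) : ℕ :=
  sInf {T' : ℕ | ∀ T : ℕ, T' ≤ T → ∀ ν : Fin n → ℝ, IsProbVec ν →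
    tvDist ((ν ᵥ* P₀) ᵥ* adiabProd P₀ P₁ T T) π₁ ≤ ε}

/-- Stable adiabatic time, where `π s` is the stationary distribution of `P_s`. -/
noncomputable def stableAdiabaticTime {n : ℕ} (P₀ P₁ : Matrix (Fin n) (Fin n) ℝ)
    (π : ℝ → Fin n → ℝ) (ε : ℝ) : ℕ :=
  sInf {T : ℕ | ∀ k : ℕ, 1 ≤ k → k ≤ T →
    tvDist ((π 0) ᵥ* adiabProd P₀ P₁ T k) (π ((k : ℝ) / (T : ℝ))) < ε}

/-- `t_mix(ε) = sup_{s ∈ [0,1]} t_mix(P_s, ε)`, where `π s` is the stationary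
distribution of `P_s`. -/
noncomputable def maxMixingTime {n : ℕ} (P₀ P₁ : Matrix (Fin n) (Fin n) ℝ)
    (π : ℝ → Fin n → ℝ) (ε : ℝ) : ℕ :=
  sSup {m : ℕ | ∃ s ∈ Set.Icc (0 : ℝ) 1, m = mixingTime (Pt P₀ P₁ s) (π s) ε}

/-- `s` is a singular value of `A`: `s ≥ 0` and `s²` is an eigenvalue of `A Aᵀ`
(for a left eigenvector). -/
def IsSingularValue {n : ℕ} (A : Matrix (Fin n) (Fin n) ℝ) (s : ℝ) : Prop :=
  0 ≤ s ∧ ∃ v : Fin n → ℝ, v ≠ 0 ∧ v ᵥ* (A * Aᵀ) = (s ^ 2) • v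

/-- `σ` is the smallest nonzero (positive) singular value of `A`. -/
def IsSmallestPosSingularValue {n : ℕ} (A : Matrix (Fin n) (Fin n) ℝ) (σ : ℝ) : Prop :=
  0 < σ ∧ IsSingularValue A σ ∧ ∀ s : ℝ, 0 < s → IsSingularValue A s → σ ≤ s

lemma stoch_pow {n : ℕ} {P : Matrix (Fin n) (Fin n) ℝ} (h : IsStochastic P) (m : ℕ) :
    IsStochastic (P ^ m) := by
  induction m with
  | zero =>
    constructor
    · intro i j
      by_cases hij : i = j <;> simp [pow_zero, Matrix.one_apply, hij]
    · intro i; simp [pow_zero, Matrix.one_apply]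
  | succ m ih =>
    rw [pow_succ]
    constructor
    · intro i j
      rw [Matrix.mul_apply]
      exact Finset.sum_nonneg fun k _ => mul_nonneg (ih.1 i k) (h.1 k j)
    · intro i
      simp only [Matrix.mul_apply]
      rw [Finset.sum_comm]
      calc ∑ k, ∑ j, (P ^ m) i k * P k j = ∑ k, (P ^ m) i k * ∑ j, P k j := by
            simp [Finset.mul_sum]
        _ = 1 := by simp [h.2, ih.2 i]

lemma ker_const {n : ℕ} (hn : 1 ≤ n) {P : Matrix (Fin n) (Fin n) ℝ}
    (hP : IsStochastic P) (hPi : ∀ i j, ∃ m : ℕ, 0 < (P ^ m) i j)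
    (x : Fin n → ℝ) (hx : P *ᵥ x = x) : ∃ c : ℝ, x = fun _ => c := by
  have hpow : ∀ m, (P ^ m) *ᵥ x = x := by
    intro m
    induction m with
    | zero => simp
    | succ m ih => rw [pow_succ, ← Matrix.mulVec_mulVec, hx, ih]
  obtain ⟨i₀, _, hmax⟩ := Finset.exists_max_image Finset.univ x ⟨⟨0, hn⟩, Finset.mem_univ _⟩
  refine ⟨x i₀, funext fun j => ?_⟩
  obtain ⟨m, hm⟩ := hPi i₀ j
  have hsum : ∑ k, (P ^ m) i₀ k * (x i₀ - x k) = 0 := by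
    have h1 : ∑ k, (P ^ m) i₀ k * x k = x i₀ := congrFun (hpow m) i₀
    have h2 : ∑ k, (P ^ m) i₀ k * x i₀ = x i₀ := by
      rw [← Finset.sum_mul, (stoch_pow hP m).2 i₀, one_mul]
    simp only [mul_sub, Finset.sum_sub_distrib, h1, h2, sub_self]
  have hterm : ∀ k ∈ Finset.univ, (0:ℝ) ≤ (P ^ m) i₀ k * (x i₀ - x k) := by
    intro k _
    exact mul_nonneg ((stoch_pow hP m).1 i₀ k) (sub_nonneg.2 (hmax k (Finset.mem_univ k)))
  have := (Finset.sum_eq_zero_iff_of_nonneg hterm).1 hsum j (Finset.mem_univ j)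
  rcases mul_eq_zero.1 this with h | h
  · exact absurd h (ne_of_gt hm)
  · linarith [sub_eq_zero.1 h]

section Key

variable {n : ℕ}

local notation "E" => EuclideanSpace ℝ (Fin n)

lemma inner_eq (x y : E) : @inner ℝ _ _ x y = ∑ i, x i * y i := by
  simp [PiLp.inner_apply, RCLike.inner_apply, mul_comm]

lemma norm_eq' (x : E) : ‖x‖ = Real.sqrt (∑ i, x i ^ 2) := by
  rw [EuclideanSpace.norm_eq]; simp [sq_abs]

lemma toE_vecMul (A : Matrix (Fin n) (Fin n) ℝ) (x : E) :
    Matrix.toEuclideanLin Aᵀ x = (x : Fin n → ℝ) ᵥ* A := by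
  rw [Matrix.toEuclideanLin_apply, Matrix.mulVec_transpose]

set_option maxHeartbeats 1000000 in
lemma key (hn : 1 ≤ n) (A : Matrix (Fin n) (Fin n) ℝ) (π0 : Fin n → ℝ)
    (hπsum : ∑ i, π0 i = 1) (hπnn : ∀ i, 0 ≤ π0 i) (hπker : π0 ᵥ* A = 0)
    (hker : ∀ x : Fin n → ℝ, A *ᵥ x = 0 → ∃ c : ℝ, x = fun _ => c)
    (hone : A *ᵥ (fun _ => (1:ℝ)) = 0)
    (σ : ℝ) (hσ : IsSmallestPosSingularValue A σ)
    (v : Fin n → ℝ) (hv : ∑ i, v i = 0) :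
    Real.sqrt (∑ i, v i ^ 2) ≤ (Real.sqrt n + 1) / σ * Real.sqrt (∑ j, (v ᵥ* A) j ^ 2) := by
  classical
  set f : E →ₗ[ℝ] E := Matrix.toEuclideanLin Aᵀ with hf
  have hfap : ∀ x : E, f x = (x : Fin n → ℝ) ᵥ* A := toE_vecMul A
  set K : Submodule ℝ E := LinearMap.ker f with hK
  -- π0 ∈ K, π0 ≠ 0
  have hπ0E : (WithLp.toLp 2 π0 : E) ∈ K := LinearMap.mem_ker.mpr ((WithLp.ofLp_eq_zero 2).mp ((hfap _).trans hπker))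
  have hπ0ne : (WithLp.toLp 2 π0 : E) ≠ 0 := by
    intro h
    have h0 : ∀ i, π0 i = 0 := fun i => by simpa using congrArg (fun w : E => w i) h
    simp [h0] at hπsum
  -- finrank of ker of A.mulVecLin is 1
  have hkerA : LinearMap.ker A.mulVecLin = Submodule.span ℝ {(fun _ => (1:ℝ))} := by
    apply le_antisymm
    · intro x hx
      obtain ⟨c, hc⟩ := hker x (by simpa using hx)
      rw [hc]
      exact Submodule.mem_span_singleton.2 ⟨c, by funext i; simp⟩
    · rw [Submodule.span_singleton_le_iff_mem]
      simpa using hone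
  have hone_ne : (fun _ => (1:ℝ)) ≠ (0 : Fin n → ℝ) := by
    intro h
    have := congrFun h ⟨0, hn⟩; norm_num at this
  have hrkA : Matrix.rank A + 1 = n := by
    have h1 := LinearMap.finrank_range_add_finrank_ker A.mulVecLin
    rw [hkerA, finrank_span_singleton hone_ne] at h1
    simpa [Matrix.rank] using h1
  -- finrank K = 1
  have hKfin : Module.finrank ℝ K = 1 := by
    have hfeq : K = (LinearMap.ker Aᵀ.mulVecLin).map
        (WithLp.linearEquiv 2 ℝ (Fin n → ℝ)).symm.toLinearMap := by
      ext x
      simp only [Submodule.mem_map, LinearMap.mem_ker, hK]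
      constructor
      · intro hx
        refine ⟨(WithLp.linearEquiv 2 ℝ (Fin n → ℝ)) x, ?_, by simp⟩
        have := hfap x
        have hx' : (x : Fin n → ℝ) ᵥ* A = 0 := by rw [← this, hx]; rfl
        rw [Matrix.mulVecLin_apply, Matrix.mulVec_transpose]
        exact hx'
      · rintro ⟨y, hy, rfl⟩
        rw [Matrix.mulVecLin_apply, Matrix.mulVec_transpose] at hy
        exact LinearMap.mem_ker.mpr ((WithLp.ofLp_eq_zero 2).mp ((hfap _).trans hy))
    rw [hfeq, LinearEquiv.finrank_map_eq]
    have h2 := LinearMap.finrank_range_add_finrank_ker Aᵀ.mulVecLin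
    have h3 : Matrix.rank Aᵀ = Matrix.rank A := Matrix.rank_transpose A
    have h4 : Matrix.rank Aᵀ + Module.finrank ℝ (LinearMap.ker Aᵀ.mulVecLin) = n := by
      simpa [Matrix.rank] using h2
    omega
  -- K = span π0
  have hKspan : K = Submodule.span ℝ {(WithLp.toLp 2 π0 : E)} := by
    symm
    apply Submodule.eq_of_le_of_finrank_le
    · rw [Submodule.span_singleton_le_iff_mem]; exact hπ0E
    · rw [finrank_span_singleton hπ0ne]
      exact le_of_eq hKfin
  -- the symmetric PSD matrix B = A Aᵀ and its operator
  set B : Matrix (Fin n) (Fin n) ℝ := A * Aᵀ with hB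
  have hBsymm : Bᵀ = B := by rw [hB, Matrix.transpose_mul, Matrix.transpose_transpose]
  set T : E →ₗ[ℝ] E := Matrix.toEuclideanLin Bᵀ with hT
  have hTap : ∀ x : E, T x = (x : Fin n → ℝ) ᵥ* B := toE_vecMul B
  have hvecB : ∀ x : Fin n → ℝ, x ᵥ* B = (x ᵥ* A) ᵥ* Aᵀ :=
    fun x => (Matrix.vecMul_vecMul x A Aᵀ).symm
  have hTxx : ∀ x : E, (inner ℝ (T x) x) = ∑ j, ((x : Fin n → ℝ) ᵥ* A) j ^ 2 := by
    intro x
    rw [inner_eq, hTap]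
    have : ∀ i, ((x : Fin n → ℝ) ᵥ* B) i * x i
        = (dotProduct ((x : Fin n → ℝ) ᵥ* B) x * 0) + ((x : Fin n → ℝ) ᵥ* B) i * x i := by
      intro i; ring
    calc ∑ i, ((x : Fin n → ℝ) ᵥ* B) i * (x : Fin n → ℝ) i
        = dotProduct ((x : Fin n → ℝ) ᵥ* B) x := rfl
      _ = dotProduct ((x : Fin n → ℝ) ᵥ* A) ((x : Fin n → ℝ) ᵥ* A) := by
          rw [hvecB, Matrix.vecMul_transpose, dotProduct_comm,
            dotProduct_mulVec]
      _ = ∑ j, ((x : Fin n → ℝ) ᵥ* A) j ^ 2 := by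
          simp [dotProduct, sq]
  have hBherm : B.IsHermitian := by
    ext i j
    simp only [Matrix.conjTranspose_apply, star_trivial]
    exact congrFun (congrFun hBsymm i) j
  have hTsymm : T.IsSymmetric := by
    rw [hT, hBsymm]
    exact Matrix.isHermitian_iff_isSymmetric.mp hBherm
  have hTker : ∀ x : E, T x = 0 ↔ (x : Fin n → ℝ) ᵥ* A = 0 := by
    intro x
    constructor
    · intro hx
      have h0 : (∑ j, ((x : Fin n → ℝ) ᵥ* A) j ^ 2) = 0 := by
        rw [← hTxx x, hx, inner_zero_left]
      funext j
      have := (Finset.sum_eq_zero_iff_of_nonneg (fun j _ => sq_nonneg _)).1 h0 j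
        (Finset.mem_univ j)
      exact pow_eq_zero_iff (n := 2) (by norm_num) |>.1 this
    · intro hx
      have : (x : Fin n → ℝ) ᵥ* B = 0 := by rw [hvecB, hx, Matrix.zero_vecMul]
      exact (WithLp.ofLp_eq_zero 2).mp ((hTap x).trans this)
  have hinv : ∀ x ∈ Kᗮ, T x ∈ Kᗮ := by
    intro x hx
    rw [Submodule.mem_orthogonal]
    intro u hu
    have huA : (u : Fin n → ℝ) ᵥ* A = 0 := (hfap u).symm.trans (by rw [show f u = 0 from hu]; rfl)
    have hTu : T u = 0 := (hTker u).2 huA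
    calc (inner ℝ u (T x)) = inner ℝ (T u) x := (hTsymm u x).symm
      _ = 0 := by rw [hTu, inner_zero_left]
  have hbound : ∀ z : E, z ∈ Kᗮ →
      σ ^ 2 * ‖z‖ ^ 2 ≤ ∑ j, ((z : Fin n → ℝ) ᵥ* A) j ^ 2 := by
    intro z hz
    rcases eq_or_ne z 0 with rfl | hzne
    · simp [Matrix.zero_vecMul]
    · haveI : Nontrivial ↥(Kᗮ) :=
        ⟨⟨z, hz⟩, 0, by simp [Subtype.ext_iff, hzne]⟩
      set S : ↥(Kᗮ) →ₗ[ℝ] ↥(Kᗮ) := T.restrict hinv with hS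
      have hSsymm : S.IsSymmetric := hTsymm.restrict_invariant hinv
      have hSinner : ∀ x : ↥(Kᗮ), (inner ℝ (S x) x)
          = ∑ j, (((x : E) : Fin n → ℝ) ᵥ* A) j ^ 2 := by
        intro x
        rw [Submodule.coe_inner]
        have : ((S x : ↥(Kᗮ)) : E) = T (x : E) := rfl
        rw [this]
        exact hTxx (x : E)
      set μ : ℝ := ⨅ x : {x : ↥(Kᗮ) // x ≠ 0},
        RCLike.re (inner ℝ (S x) (x : ↥(Kᗮ)) : ℝ) / ‖(x : ↥(Kᗮ))‖ ^ 2 with hμ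
      have hray_nonneg : ∀ x : {x : ↥(Kᗮ) // x ≠ 0},
          0 ≤ RCLike.re (inner ℝ (S x) (x : ↥(Kᗮ)) : ℝ) / ‖(x : ↥(Kᗮ))‖ ^ 2 := by
        intro x
        apply div_nonneg _ (sq_nonneg _)
        simp only [RCLike.re_to_real, hSinner]
        exact Finset.sum_nonneg fun j _ => sq_nonneg _
      have hbdd : BddBelow (Set.range fun x : {x : ↥(Kᗮ) // x ≠ 0} =>
          RCLike.re (inner ℝ (S x) (x : ↥(Kᗮ)) : ℝ) / ‖(x : ↥(Kᗮ))‖ ^ 2) := by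
        refine ⟨0, ?_⟩
        rintro _ ⟨x, rfl⟩
        exact hray_nonneg x
      have hμ_nonneg : 0 ≤ μ := Real.iInf_nonneg hray_nonneg
      have hev := hSsymm.hasEigenvalue_iInf_of_finiteDimensional
      obtain ⟨u, hu⟩ := hev.exists_hasEigenvector
      have hSu : S u = μ • u := hu.apply_eq_smul
      have hTu : T (u : E) = μ • (u : E) := by
        have h1 : ((S u : ↥(Kᗮ)) : E) = T (u : E) := rfl
        rw [← h1, hSu]
        simp
      have huEne : (u : E) ≠ 0 := fun h => hu.right (Subtype.ext h)
      have hμpos : 0 < μ := by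
        rcases hμ_nonneg.lt_or_eq with h | h
        · exact h
        · exfalso
          have hT0 : T (u : E) = 0 := by rw [hTu, ← h]; simp
          have huK : (u : E) ∈ K := LinearMap.mem_ker.mpr ((WithLp.ofLp_eq_zero 2).mp ((hfap _).trans ((hTker _).1 hT0)))
          have : (u : E) = 0 := by
            have hdisj := Submodule.orthogonal_disjoint K
            exact (Submodule.disjoint_def.mp hdisj) _ huK u.2
          exact huEne this
      have hσ2μ : σ ^ 2 ≤ μ := by
        have hsing : IsSingularValue A (Real.sqrt μ) := by
          refine ⟨Real.sqrt_nonneg _, ((u : E) : Fin n → ℝ), fun h => huEne ((WithLp.ofLp_eq_zero 2).mp h), ?_⟩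
          rw [Real.sq_sqrt hμ_nonneg]
          rw [← hTap (u : E), hTu, WithLp.ofLp_smul]
        have hle := hσ.2.2 (Real.sqrt μ) (Real.sqrt_pos.mpr hμpos) hsing
        calc σ ^ 2 ≤ Real.sqrt μ ^ 2 := by
              apply pow_le_pow_left₀ hσ.1.le hle
          _ = μ := Real.sq_sqrt hμ_nonneg
      have hμray : μ ≤ (∑ j, ((z : Fin n → ℝ) ᵥ* A) j ^ 2) / ‖z‖ ^ 2 := by
        have := ciInf_le hbdd ⟨⟨z, hz⟩, by simp [Subtype.ext_iff, hzne]⟩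
        rw [hμ]
        refine this.trans (le_of_eq ?_)
        simp only [RCLike.re_to_real]
        rw [hSinner]
        rfl
      have hz2 : (0:ℝ) < ‖z‖ ^ 2 := pow_pos (norm_pos_iff.mpr hzne) 2
      calc σ ^ 2 * ‖z‖ ^ 2 ≤ μ * ‖z‖ ^ 2 := by nlinarith
        _ ≤ ∑ j, ((z : Fin n → ℝ) ᵥ* A) j ^ 2 := by
            rw [← div_mul_cancel₀ (∑ j, ((z : Fin n → ℝ) ᵥ* A) j ^ 2) hz2.ne']
            exact mul_le_mul_of_nonneg_right hμray hz2.le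
  -- decompose v = k + z
  obtain ⟨k, hkK, z, hzK, hvkz⟩ := K.exists_add_mem_mem_orthogonal (WithLp.toLp 2 v : E)
  obtain ⟨c, hc⟩ := Submodule.mem_span_singleton.1 (hKspan ▸ hkK)
  set vE : E := (WithLp.equiv 2 (Fin n → ℝ)).symm v with hvEdef
  set π0E : E := (WithLp.equiv 2 (Fin n → ℝ)).symm π0 with hπ0Edef
  have hvkz' : vE = k + z := hvkz
  have hcoord : ∀ i, v i = c * π0 i + (z : Fin n → ℝ) i := by
    intro i
    have h1 : v i = (k + z) i := congrArg (fun w : E => w i) hvkz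
    have h2 : k i = c * π0 i := by rw [← hc]; rfl
    rw [h1]
    show (k + z) i = _
    rw [show (k + z) i = k i + z i from rfl, h2]
  have hcval : c = - ∑ i, (z : Fin n → ℝ) i := by
    have : (0:ℝ) = ∑ i, (c * π0 i + (z : Fin n → ℝ) i) := by
      rw [← hv]; exact Finset.sum_congr rfl fun i _ => hcoord i
    rw [Finset.sum_add_distrib, ← Finset.mul_sum, hπsum] at this
    linarith
  -- bound |c| by √n ‖z‖
  set oneE : E := (WithLp.equiv 2 (Fin n → ℝ)).symm (fun _ => (1:ℝ)) with honeE
  have hone_norm : ‖oneE‖ = Real.sqrt n := by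
    rw [norm_eq' oneE]
    congr 1
    have h1 : ∀ x : Fin n, oneE x = 1 := fun _ => rfl
    rw [Finset.sum_congr rfl fun x _ => by rw [h1 x]]
    simp
  have hzsum : |∑ i, (z : Fin n → ℝ) i| ≤ Real.sqrt n * ‖z‖ := by
    have h1 := abs_real_inner_le_norm z oneE
    rw [inner_eq, hone_norm] at h1
    have h2 : ∀ i, (z : Fin n → ℝ) i * oneE i = (z : Fin n → ℝ) i := fun i => mul_one _
    rw [Finset.sum_congr rfl fun i _ => h2 i] at h1
    calc |∑ i, (z : Fin n → ℝ) i| ≤ ‖z‖ * Real.sqrt n := h1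
      _ = Real.sqrt n * ‖z‖ := mul_comm _ _
  have hcabs : |c| ≤ Real.sqrt n * ‖z‖ := by rw [hcval, abs_neg]; exact hzsum
  -- ‖π0‖ ≤ 1
  have hπ0le : ∀ i, π0 i ≤ 1 := by
    intro i
    rw [← hπsum]
    exact Finset.single_le_sum (fun j _ => hπnn j) (Finset.mem_univ i)
  have hπnorm : ‖π0E‖ ≤ 1 := by
    rw [norm_eq' π0E]
    rw [show (1:ℝ) = Real.sqrt 1 from (Real.sqrt_one).symm]
    apply Real.sqrt_le_sqrt
    calc ∑ i, π0E i ^ 2 = ∑ i, π0 i ^ 2 := rfl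
      _ ≤ ∑ i, π0 i := by
          apply Finset.sum_le_sum
          intro i _
          nlinarith [hπnn i, hπ0le i]
      _ = 1 := hπsum
  have hkpi : c • π0E = k := hc
  have hknorm : ‖k‖ ≤ |c| := by
    rw [← hkpi, norm_smul, Real.norm_eq_abs]
    calc |c| * ‖π0E‖ ≤ |c| * 1 := mul_le_mul_of_nonneg_left hπnorm (abs_nonneg c)
      _ = |c| := mul_one _
  -- v ᵥ* A = z ᵥ* A
  have hzA : v ᵥ* A = (fun i => (z : Fin n → ℝ) i) ᵥ* A := by
    have hveq : v = (c • π0) + (fun i => (z : Fin n → ℝ) i) := by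
      funext i; rw [hcoord i]; rfl
    rw [hveq, Matrix.add_vecMul, Matrix.smul_vecMul, hπker]
    simp
  have hmain : σ ^ 2 * ‖z‖ ^ 2 ≤ ∑ j, (v ᵥ* A) j ^ 2 := by
    rw [hzA]; exact hbound z hzK
  have hAnonneg : (0:ℝ) ≤ ∑ j, (v ᵥ* A) j ^ 2 := Finset.sum_nonneg fun j _ => sq_nonneg _
  have hzle : σ * ‖z‖ ≤ Real.sqrt (∑ j, (v ᵥ* A) j ^ 2) := by
    rw [show σ * ‖z‖ = Real.sqrt ((σ * ‖z‖) ^ 2) from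
      (Real.sqrt_sq (mul_nonneg hσ.1.le (norm_nonneg z))).symm]
    apply Real.sqrt_le_sqrt
    calc (σ * ‖z‖) ^ 2 = σ ^ 2 * ‖z‖ ^ 2 := by ring
      _ ≤ _ := hmain
  have hvnorm : ‖vE‖ ≤ (Real.sqrt n + 1) * ‖z‖ := by
    calc ‖vE‖ = ‖k + z‖ := by rw [hvkz']
      _ ≤ ‖k‖ + ‖z‖ := norm_add_le k z
      _ ≤ Real.sqrt n * ‖z‖ + ‖z‖ := by
          have := hknorm.trans hcabs
          linarith
      _ = (Real.sqrt n + 1) * ‖z‖ := by ring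
  have hσpos := hσ.1
  have h1 : ‖z‖ ≤ Real.sqrt (∑ j, (v ᵥ* A) j ^ 2) / σ := by
    rw [le_div_iff₀ hσpos]
    linarith [hzle]
  have hsn : (0:ℝ) ≤ Real.sqrt n + 1 := by positivity
  have hfinal : ‖vE‖ ≤ (Real.sqrt n + 1) / σ * Real.sqrt (∑ j, (v ᵥ* A) j ^ 2) := by
    calc ‖vE‖ ≤ (Real.sqrt n + 1) * ‖z‖ := hvnorm
      _ ≤ (Real.sqrt n + 1) * (Real.sqrt (∑ j, (v ᵥ* A) j ^ 2) / σ) :=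
          mul_le_mul_of_nonneg_left h1 hsn
      _ = (Real.sqrt n + 1) / σ * Real.sqrt (∑ j, (v ᵥ* A) j ^ 2) := by ring
  calc Real.sqrt (∑ i, v i ^ 2) = Real.sqrt (∑ i, vE i ^ 2) := rfl
    _ = ‖vE‖ := (norm_eq' vE).symm
    _ ≤ _ := hfinal

end Key


section Helpers

variable {n : ℕ}

local notation "EE" => EuclideanSpace ℝ (Fin n)

lemma sum_abs_le_sqrt (v : Fin n → ℝ) :
    ∑ i, |v i| ≤ Real.sqrt n * Real.sqrt (∑ i, v i ^ 2) := by
  set av : EE := (WithLp.equiv 2 (Fin n → ℝ)).symm (fun i => |v i|) with hav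
  set oneE : EE := (WithLp.equiv 2 (Fin n → ℝ)).symm (fun _ => (1:ℝ)) with honeE
  have h := abs_real_inner_le_norm av oneE
  rw [inner_eq] at h
  have h2 : ∀ i, av i * oneE i = |v i| := fun i => mul_one _
  rw [Finset.sum_congr rfl fun i _ => h2 i] at h
  have h3 : ‖av‖ = Real.sqrt (∑ i, v i ^ 2) := by
    rw [norm_eq' av]
    congr 1
    exact Finset.sum_congr rfl fun i _ => by rw [show av i = |v i| from rfl, sq_abs]
  have h4 : ‖oneE‖ = Real.sqrt n := by
    rw [norm_eq' oneE]
    rw [Finset.sum_congr rfl fun x (_ : x ∈ Finset.univ) =>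
      (show oneE x ^ 2 = 1 by rw [show oneE x = 1 from rfl]; norm_num)]
    simp
  rw [h3, h4] at h
  linarith [h, le_abs_self (∑ i, |v i|)]

lemma l2_le_l1 (v : Fin n → ℝ) :
    Real.sqrt (∑ i, v i ^ 2) ≤ ∑ i, |v i| := by
  have hnn : 0 ≤ ∑ i, |v i| := Finset.sum_nonneg fun i _ => abs_nonneg _
  rw [show ∑ i, |v i| = Real.sqrt ((∑ i, |v i|) ^ 2) from (Real.sqrt_sq hnn).symm]
  apply Real.sqrt_le_sqrt
  calc ∑ i, v i ^ 2 = ∑ i, |v i| ^ 2 := Finset.sum_congr rfl fun i _ => (sq_abs _).symm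
    _ ≤ (∑ i, |v i|) ^ 2 := Finset.sum_sq_le_sq_sum_of_nonneg fun i _ => abs_nonneg _

lemma vecMul_prob {μ : Fin n → ℝ} (hμ : IsProbVec μ) {P : Matrix (Fin n) (Fin n) ℝ}
    (hP : IsStochastic P) : (∀ j, 0 ≤ (μ ᵥ* P) j) ∧ ∑ j, (μ ᵥ* P) j = 1 := by
  constructor
  · intro j
    have hj : (μ ᵥ* P) j = ∑ i, μ i * P i j := rfl
    rw [hj]
    exact Finset.sum_nonneg fun i _ => mul_nonneg (hμ.1 i) (hP.1 i j)
  · calc ∑ j, (μ ᵥ* P) j = ∑ j, ∑ i, μ i * P i j := rfl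
      _ = ∑ i, ∑ j, μ i * P i j := Finset.sum_comm
      _ = ∑ i, μ i := Finset.sum_congr rfl fun i _ => by
          rw [← Finset.mul_sum, hP.2 i, mul_one]
      _ = 1 := hμ.2

end Helpers

lemma main_bound {n : ℕ} (hn : 1 ≤ n) (P₀ P₁ : Matrix (Fin n) (Fin n) ℝ)
    (hP₀ : IsStochastic P₀) (hP₀i : MCIrreducible P₀)
    (hP₁ : IsStochastic P₁)
    (π : ℝ → Fin n → ℝ)
    (hπ : ∀ t ∈ Set.Icc (0 : ℝ) 1, IsProbVec (π t) ∧ (π t) ᵥ* (Pt P₀ P₁ t) = π t)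
    (σ : ℝ) (hσ : IsSmallestPosSingularValue (1 - P₀) σ) :
    ∀ ε : ℝ, 0 < ε → ∀ s ∈ Set.Icc (0 : ℝ) 1,
      s ≤ ε * σ / (2 * (n : ℝ) ^ ((3 : ℝ) / 2)) → tvDist (π s) (π 0) ≤ ε := by
  intro ε hε s hsI hsδ
  obtain ⟨hs0, hs1⟩ := hsI
  set A : Matrix (Fin n) (Fin n) ℝ := 1 - P₀ with hA
  have hPt0 : Pt P₀ P₁ 0 = P₀ := by simp [Pt]
  have hπ0 := hπ 0 ⟨le_refl 0, zero_le_one⟩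
  have hπs := hπ s ⟨hs0, hs1⟩
  have hπ0A : (π 0) ᵥ* A = 0 := by
    rw [hA, Matrix.vecMul_sub, Matrix.vecMul_one]
    rw [show (π 0) ᵥ* P₀ = π 0 from by rw [← hPt0]; exact hπ0.2]
    simp
  have hP0one : P₀ *ᵥ (fun _ => (1:ℝ)) = fun _ => (1:ℝ) := by
    funext i
    simp only [Matrix.mulVec, dotProduct, mul_one]
    exact hP₀.2 i
  have hone : A *ᵥ (fun _ => (1:ℝ)) = 0 := by
    rw [hA, Matrix.sub_mulVec, Matrix.one_mulVec, hP0one]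
    simp
  have hker : ∀ x : Fin n → ℝ, A *ᵥ x = 0 → ∃ c : ℝ, x = fun _ => c := by
    intro x hx
    rw [hA, Matrix.sub_mulVec, Matrix.one_mulVec] at hx
    exact ker_const hn hP₀ hP₀i x (sub_eq_zero.mp hx).symm
  -- the difference vector
  set v : Fin n → ℝ := fun i => π s i - π 0 i with hvdef
  have hv : ∑ i, v i = 0 := by
    rw [hvdef]
    rw [Finset.sum_sub_distrib, hπs.1.2, hπ0.1.2, sub_self]
  -- the image vector
  have hsplit : ∀ j, (1 - s) * ((π s ᵥ* P₀) j) + s * ((π s ᵥ* P₁) j) = π s j := by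
    intro j
    have h0 := congrFun hπs.2 j
    rw [Pt] at h0
    simp only [Matrix.vecMul, dotProduct, Matrix.add_apply, Matrix.smul_apply,
      smul_eq_mul] at h0 ⊢
    rw [← h0, Finset.mul_sum, Finset.mul_sum, ← Finset.sum_add_distrib]
    exact Finset.sum_congr rfl fun i _ => by ring
  have hw : ∀ j, (v ᵥ* A) j = s * ((π s ᵥ* P₁) j - (π s ᵥ* P₀) j) := by
    intro j
    have h1 : v ᵥ* A = (π s) ᵥ* A - (π 0) ᵥ* A := by
      rw [hvdef, show (fun i => π s i - π 0 i) = π s - π 0 from rfl, Matrix.sub_vecMul]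
    have h2 : (π s) ᵥ* A = π s - (π s) ᵥ* P₀ := by
      rw [hA, Matrix.vecMul_sub, Matrix.vecMul_one]
    rw [h1, hπ0A, sub_zero, h2]
    have := hsplit j
    show π s j - (π s ᵥ* P₀) j = _
    linarith [this]
  have hP1nn := vecMul_prob hπs.1 hP₁
  have hP0nn := vecMul_prob hπs.1 hP₀
  have habsw : ∑ j, |(v ᵥ* A) j| ≤ 2 * s := by
    calc ∑ j, |(v ᵥ* A) j|
        ≤ ∑ j, s * ((π s ᵥ* P₁) j + (π s ᵥ* P₀) j) := by
          apply Finset.sum_le_sum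
          intro j _
          rw [hw j, abs_mul, abs_of_nonneg hs0]
          apply mul_le_mul_of_nonneg_left _ hs0
          calc |(π s ᵥ* P₁) j - (π s ᵥ* P₀) j| ≤ |(π s ᵥ* P₁) j| + |(π s ᵥ* P₀) j| :=
                abs_sub _ _
            _ = (π s ᵥ* P₁) j + (π s ᵥ* P₀) j := by
                rw [abs_of_nonneg (hP1nn.1 j), abs_of_nonneg (hP0nn.1 j)]
      _ = 2 * s := by
          rw [← Finset.mul_sum, Finset.sum_add_distrib, hP1nn.2, hP0nn.2]
          ring
  have hwl2 : Real.sqrt (∑ j, (v ᵥ* A) j ^ 2) ≤ 2 * s := (l2_le_l1 _).trans habsw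
  have hkey := key hn A (π 0) hπ0.1.2 hπ0.1.1 hπ0A hker hone σ hσ v hv
  have habsv : ∑ i, |v i| ≤ Real.sqrt n * ((Real.sqrt n + 1) / σ * (2 * s)) := by
    calc ∑ i, |v i| ≤ Real.sqrt n * Real.sqrt (∑ i, v i ^ 2) := sum_abs_le_sqrt v
      _ ≤ Real.sqrt n * ((Real.sqrt n + 1) / σ * Real.sqrt (∑ j, (v ᵥ* A) j ^ 2)) := by
          apply mul_le_mul_of_nonneg_left hkey (Real.sqrt_nonneg _)
      _ ≤ Real.sqrt n * ((Real.sqrt n + 1) / σ * (2 * s)) := by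
          apply mul_le_mul_of_nonneg_left _ (Real.sqrt_nonneg _)
          apply mul_le_mul_of_nonneg_left hwl2
          have := hσ.1
          positivity
  -- numeric conclusion
  set t : ℝ := Real.sqrt n with ht
  have hnp : (0:ℝ) < n := by exact_mod_cast hn
  have ht1 : 1 ≤ t := by
    rw [ht, show (1:ℝ) = Real.sqrt 1 from Real.sqrt_one.symm]
    exact Real.sqrt_le_sqrt (by exact_mod_cast hn)
  have ht0 : 0 < t := lt_of_lt_of_le one_pos ht1
  have hrpow : (n : ℝ) ^ ((3 : ℝ) / 2) = t ^ 3 := by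
    rw [show (n:ℝ) = t ^ 2 from (Real.sq_sqrt hnp.le).symm]
    rw [← Real.rpow_natCast t 2, ← Real.rpow_mul ht0.le, ← Real.rpow_natCast t 3]
    norm_num
  have hσpos := hσ.1
  rw [hrpow] at hsδ
  have htv : tvDist (π s) (π 0) = (1/2) * ∑ i, |v i| := rfl
  rw [htv]
  have hchain : (1/2) * ∑ i, |v i| ≤ (1/2) * (t * ((t + 1) / σ * (2 * s))) := by
    apply mul_le_mul_of_nonneg_left _ (by norm_num)
    exact habsv
  have hs' : s ≤ ε * σ / (2 * t ^ 3) := hsδ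
  have hfin : (1/2) * (t * ((t + 1) / σ * (2 * s))) ≤ ε := by
    have h1 : (1/2) * (t * ((t + 1) / σ * (2 * s))) = t * (t + 1) * s / σ := by
      field_simp
    rw [h1]
    rw [div_le_iff₀ hσpos]
    have h2 : t * (t + 1) * s ≤ t * (t + 1) * (ε * σ / (2 * t ^ 3)) := by
      apply mul_le_mul_of_nonneg_left hs'
      nlinarith
    refine h2.trans ?_
    have h3 : t * (t + 1) * (ε * σ / (2 * t ^ 3)) = ε * σ * ((t + 1) / (2 * t ^ 2)) := by
      field_simp [ht0.ne', hσpos.ne']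
    rw [h3]
    have h4 : (t + 1) / (2 * t ^ 2) ≤ 1 := by
      rw [div_le_one (by positivity)]
      nlinarith
    calc ε * σ * ((t + 1) / (2 * t ^ 2)) ≤ ε * σ * 1 := by
          apply mul_le_mul_of_nonneg_left h4 (by positivity)
      _ = ε * σ := mul_one _
  exact hchain.trans hfin

/-- With σ the smallest nonzero singular value of I − P₀: for every ε > 0,
taking δ = εσ/(2 n^{3/2}), every s ∈ [0,1] with s ≤ δ satisfies
`‖π_s − π₀‖_TV ≤ ε`; in particular s ↦ π_s is continuous at s = 0 in total variation. -/
theorem stmt_7 {n : ℕ} (hn : 1 ≤ n) (P₀ P₁ : Matrix (Fin n) (Fin n) ℝ)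
    (hP₀ : IsStochastic P₀) (hP₀i : MCIrreducible P₀) (hP₀a : MCAperiodic P₀)
    (hP₁ : IsStochastic P₁) (hP₁i : MCIrreducible P₁) (hP₁a : MCAperiodic P₁)
    (π : ℝ → Fin n → ℝ)
    (hπ : ∀ t ∈ Set.Icc (0 : ℝ) 1, IsProbVec (π t) ∧ (π t) ᵥ* (Pt P₀ P₁ t) = π t)
    (σ : ℝ) (hσ : IsSmallestPosSingularValue (1 - P₀) σ) :
    (∀ ε : ℝ, 0 < ε → ∀ s ∈ Set.Icc (0 : ℝ) 1,
        s ≤ ε * σ / (2 * (n : ℝ) ^ ((3 : ℝ) / 2)) → tvDist (π s) (π 0) ≤ ε) ∧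
    Filter.Tendsto (fun s => tvDist (π s) (π 0))
      (nhdsWithin 0 (Set.Icc (0 : ℝ) 1)) (nhds 0) := by
  have hmb := main_bound hn P₀ P₁ hP₀ hP₀i hP₁ π hπ σ hσ
  refine ⟨hmb, ?_⟩
  rw [Metric.tendsto_nhdsWithin_nhds]
  intro ε hε
  have hnp : (0:ℝ) < n := by exact_mod_cast hn
  have hrpos : (0:ℝ) < (n : ℝ) ^ ((3 : ℝ) / 2) := Real.rpow_pos_of_pos hnp _
  have hσpos := hσ.1
  refine ⟨(ε / 2) * σ / (2 * (n : ℝ) ^ ((3 : ℝ) / 2)), by positivity, ?_⟩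
  intro x hx hdist
  rw [Real.dist_eq, sub_zero] at hdist
  have hx0 : 0 ≤ x := hx.1
  have hxδ : x ≤ (ε / 2) * σ / (2 * (n : ℝ) ^ ((3 : ℝ) / 2)) := by
    rw [abs_of_nonneg hx0] at hdist
    exact hdist.le
  have htv := hmb (ε / 2) (half_pos hε) x hx hxδ
  have htvnn : 0 ≤ tvDist (π x) (π 0) := by
    unfold tvDist
    apply mul_nonneg (by norm_num)
    exact Finset.sum_nonneg fun i _ => abs_nonneg _
  rw [Real.dist_eq, sub_zero, abs_of_nonneg htvnn]
  linarith
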